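/- For k ≥ 2, define H_{k+1}(n) as the generalized Frame-Stewart number with (p_3, q_3) = (3, 2) and (p_i, q_i) = (2, 1) for 4 ≤ i ≤ k+1. Then H_{k+1}(n) is an upper bound on the minimum number of moves needed to transfer n disks from one leaf to another leaf in the Tower of Hanoi problem on the star graph S_k (one center vertex connected to k leaves). -/
import Mathlib


/-- One legal move of the Tower of Hanoi on a graph with adjacency `adj`. -/
def HanoiMove {α : Type*} (adj : α → α → Prop) {n : ℕ} (c c' : Fin n → α) : Prop :=
  ∃ d : Fin n, adj (c d) (c' d) ∧ (∀ e, e ≠ d → c e = c' e) ∧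
    ∀ e, e < d → c e ≠ c d ∧ c e ≠ c' d

/-- Configuration `c₁` is reachable from `c₀` in exactly `m` moves. -/
def HanoiReach {α : Type*} (adj : α → α → Prop) {n : ℕ} (c₀ c₁ : Fin n → α) (m : ℕ) : Prop :=
  ∃ f : ℕ → Fin n → α, f 0 = c₀ ∧ f m = c₁ ∧ ∀ i < m, HanoiMove adj (f i) (f (i + 1))

/-- Adjacency of the star graph S_k on vertices Fin (k+1): vertex 0 is the center,
connected to each of the k leaves. -/
def StarAdj (k : ℕ) (x y : Fin (k + 1)) : Prop :=
  (x = 0 ∧ y ≠ 0) ∨ (y = 0 ∧ x ≠ 0)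

namespace StarHanoi

variable {K : ℕ}

/-- Reachability staying inside vertex set `insert 0 S`. -/
def ReachIn (K : ℕ) (S : Finset (Fin (K + 1))) {n : ℕ} (c0 c1 : Fin n → Fin (K + 1)) (m : ℕ) :
    Prop :=
  ∃ f : ℕ → Fin n → Fin (K + 1), f 0 = c0 ∧ f m = c1 ∧
    (∀ i ≤ m, ∀ d, f i d ∈ insert (0 : Fin (K + 1)) S) ∧
    ∀ i < m, HanoiMove (StarAdj K) (f i) (f (i + 1))

lemma ReachIn.hanoiReach {S : Finset (Fin (K + 1))} {n m : ℕ} {c0 c1 : Fin n → Fin (K + 1)}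
    (h : ReachIn K S c0 c1 m) : HanoiReach (StarAdj K) c0 c1 m := by
  obtain ⟨f, h0, h1, _, hm⟩ := h
  exact ⟨f, h0, h1, hm⟩

lemma ReachIn.zero {S : Finset (Fin (K + 1))} {n : ℕ} {c0 c1 : Fin n → Fin (K + 1)}
    (h : c0 = c1) (hS : ∀ d, c0 d ∈ insert (0 : Fin (K + 1)) S) :
    ReachIn K S c0 c1 0 :=
  ⟨fun _ => c0, rfl, h.symm ▸ rfl, fun _ _ d => hS d, fun i hi => absurd hi (by omega)⟩

lemma ReachIn.single {S : Finset (Fin (K + 1))} {n : ℕ} {c0 c1 : Fin n → Fin (K + 1)}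
    (hm : HanoiMove (StarAdj K) c0 c1)
    (h0 : ∀ d, c0 d ∈ insert (0 : Fin (K + 1)) S)
    (h1 : ∀ d, c1 d ∈ insert (0 : Fin (K + 1)) S) :
    ReachIn K S c0 c1 1 := by
  refine ⟨fun i => if i = 0 then c0 else c1, by simp, by simp, ?_, ?_⟩
  · intro i _ d
    by_cases h : i = 0 <;> simp [h, h0 d, h1 d]
  · intro i hi
    have : i = 0 := by omega
    subst this
    simpa using hm

lemma ReachIn.trans {S : Finset (Fin (K + 1))} {n m1 m2 : ℕ} {c0 c1 c2 : Fin n → Fin (K + 1)}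
    (h1 : ReachIn K S c0 c1 m1) (h2 : ReachIn K S c1 c2 m2) :
    ReachIn K S c0 c2 (m1 + m2) := by
  obtain ⟨f, hf0, hf1, hfS, hfm⟩ := h1
  obtain ⟨g, hg0, hg1, hgS, hgm⟩ := h2
  have key : ∀ i, m1 ≤ i → (if i ≤ m1 then f i else g (i - m1)) = g (i - m1) := by
    intro i hi
    by_cases h : i ≤ m1
    · have : i = m1 := le_antisymm h hi
      subst this
      simp [hf1, ← hg0]
    · simp [h]
  refine ⟨fun i => if i ≤ m1 then f i else g (i - m1), by simp [hf0], ?_, ?_, ?_⟩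
  · show (if m1 + m2 ≤ m1 then f (m1 + m2) else g (m1 + m2 - m1)) = c2
    rw [key (m1 + m2) (by omega)]
    have : m1 + m2 - m1 = m2 := by omega
    rw [this, hg1]
  · intro i hi d
    show (if i ≤ m1 then f i else g (i - m1)) d ∈ insert (0 : Fin (K + 1)) S
    by_cases h : i ≤ m1
    · simp only [if_pos h]; exact hfS i h d
    · simp only [if_neg h]; exact hgS (i - m1) (by omega) d
  · intro i hi
    show HanoiMove (StarAdj K) (if i ≤ m1 then f i else g (i - m1))
      (if i + 1 ≤ m1 then f (i + 1) else g (i + 1 - m1))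
    by_cases h : i < m1
    · have h1' : i ≤ m1 := le_of_lt h
      have h2' : i + 1 ≤ m1 := h
      simp only [if_pos h1', if_pos h2']
      exact hfm i h
    · push_neg at h
      rw [key i h, key (i + 1) (by omega)]
      have : i + 1 - m1 = (i - m1) + 1 := by omega
      rw [this]
      exact hgm (i - m1) (by omega)

/-- Glue: the `j` smallest disks given by `top`, all larger disks at vertex `c`. -/
def glueT (n j : ℕ) (top : Fin j → Fin (K + 1)) (c : Fin (K + 1)) : Fin n → Fin (K + 1) :=
  fun e => if h : (e : ℕ) < j then top ⟨e, h⟩ else c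

/-- Glue: the `n - t` smallest disks all at vertex `ℓ`, the `t` largest given by `bot`. -/
def glueB (n t : ℕ) (ℓ : Fin (K + 1)) (bot : Fin t → Fin (K + 1)) : Fin n → Fin (K + 1) :=
  fun e => if h : (e : ℕ) < n - t then ℓ else bot ⟨(e : ℕ) - (n - t), by omega⟩

lemma glueT_const (n j : ℕ) (c : Fin (K + 1)) :
    glueT (K := K) n j (fun _ => c) c = fun _ => c := by
  funext e
  unfold glueT
  split <;> rfl

lemma glueT_eq_glueB (n t : ℕ) (ℓ c : Fin (K + 1)) :
    glueT (K := K) n (n - t) (fun _ => ℓ) c = glueB n t ℓ (fun _ => c) := by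
  funext e
  unfold glueT glueB
  split <;> rfl

/-- Lift a move sequence of the `j` smallest disks; larger disks stay put at `c`. -/
lemma liftTop {S : Finset (Fin (K + 1))} {n j m : ℕ} (hjn : j ≤ n)
    {t0 t1 : Fin j → Fin (K + 1)} (c : Fin (K + 1)) (hc : c ∈ insert (0 : Fin (K + 1)) S)
    (h : ReachIn K S t0 t1 m) :
    ReachIn K S (glueT n j t0 c) (glueT n j t1 c) m := by
  obtain ⟨f, hf0, hf1, hfS, hfm⟩ := h
  refine ⟨fun i => glueT n j (f i) c, by simp only [hf0], by simp only [hf1], ?_, ?_⟩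
  · intro i hi d
    show glueT n j (f i) c d ∈ insert (0 : Fin (K + 1)) S
    unfold glueT
    split
    · exact hfS i hi _
    · exact hc
  · intro i hi
    show HanoiMove (StarAdj K) (glueT n j (f i) c) (glueT n j (f (i + 1)) c)
    obtain ⟨d, hadj, hoth, hsm⟩ := hfm i hi
    have hd : (d : ℕ) < n := lt_of_lt_of_le d.isLt hjn
    refine ⟨⟨(d : ℕ), hd⟩, ?_, ?_, ?_⟩
    · have e1 : glueT (K := K) n j (f i) c ⟨(d : ℕ), hd⟩ = f i d := by
        unfold glueT
        rw [dif_pos d.isLt]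
      have e2 : glueT (K := K) n j (f (i + 1)) c ⟨(d : ℕ), hd⟩ = f (i + 1) d := by
        unfold glueT
        rw [dif_pos d.isLt]
      rw [e1, e2]
      exact hadj
    · intro e he
      have hne : (e : ℕ) ≠ (d : ℕ) := by
        intro hh
        exact he (Fin.ext hh)
      unfold glueT
      by_cases h' : (e : ℕ) < j
      · rw [dif_pos h', dif_pos h']
        exact hoth ⟨e, h'⟩ (by simp [Fin.ext_iff, hne])
      · rw [dif_neg h', dif_neg h']
    · intro e he
      have he' : (e : ℕ) < (d : ℕ) := he
      have hej : (e : ℕ) < j := lt_trans he' d.isLt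
      have key := hsm ⟨e, hej⟩ (by simp [Fin.lt_def]; exact he')
      have e0 : glueT (K := K) n j (f i) c e = f i ⟨e, hej⟩ := by
        unfold glueT; rw [dif_pos hej]
      have e1 : glueT (K := K) n j (f i) c ⟨(d : ℕ), hd⟩ = f i d := by
        unfold glueT; rw [dif_pos d.isLt]
      have e2 : glueT (K := K) n j (f (i + 1)) c ⟨(d : ℕ), hd⟩ = f (i + 1) d := by
        unfold glueT; rw [dif_pos d.isLt]
      rw [e0, e1, e2]
      exact key

/-- Lift a move sequence of the `t` largest disks within `S'`; the smaller disks
stay put at `ℓ ∉ insert 0 S'`. -/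
lemma liftBot {S S' : Finset (Fin (K + 1))} {n t m : ℕ} (htn : t ≤ n)
    (ℓ : Fin (K + 1)) (hℓS : ℓ ∈ insert (0 : Fin (K + 1)) S)
    (hS' : S' ⊆ S) (hℓ : ℓ ∉ insert (0 : Fin (K + 1)) S')
    {b0 b1 : Fin t → Fin (K + 1)}
    (h : ReachIn K S' b0 b1 m) :
    ReachIn K S (glueB n t ℓ b0) (glueB n t ℓ b1) m := by
  obtain ⟨f, hf0, hf1, hfS, hfm⟩ := h
  have hval : ∀ (g : Fin t → Fin (K + 1)) (d : Fin t) (hd : n - t + (d : ℕ) < n),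
      glueB (K := K) n t ℓ g ⟨n - t + (d : ℕ), hd⟩ = g d := by
    intro g d hd
    unfold glueB
    rw [dif_neg (show ¬(n - t + (d : ℕ) < n - t) by omega)]
    congr 1
    ext
    simp
  refine ⟨fun i => glueB n t ℓ (f i), by simp only [hf0], by simp only [hf1], ?_, ?_⟩
  · intro i hi d
    show glueB n t ℓ (f i) d ∈ insert (0 : Fin (K + 1)) S
    unfold glueB
    split
    · exact hℓS
    · exact Finset.insert_subset_insert _ hS' (hfS i hi _)
  · intro i hi
    show HanoiMove (StarAdj K) (glueB n t ℓ (f i)) (glueB n t ℓ (f (i + 1)))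
    obtain ⟨d, hadj, hoth, hsm⟩ := hfm i hi
    have hd : n - t + (d : ℕ) < n := by
      have := d.isLt; omega
    refine ⟨⟨n - t + (d : ℕ), hd⟩, ?_, ?_, ?_⟩
    · rw [hval (f i) d hd, hval (f (i + 1)) d hd]
      exact hadj
    · intro e he
      have hne : (e : ℕ) ≠ n - t + (d : ℕ) := fun hh => he (Fin.ext hh)
      unfold glueB
      by_cases h' : (e : ℕ) < n - t
      · rw [dif_pos h', dif_pos h']
      · rw [dif_neg h', dif_neg h']
        exact hoth ⟨(e : ℕ) - (n - t), by omega⟩ (by simp [Fin.ext_iff]; omega)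
    · intro e he
      have he' : (e : ℕ) < n - t + (d : ℕ) := he
      rw [hval (f i) d hd, hval (f (i + 1)) d hd]
      have hfi : f i d ∈ insert (0 : Fin (K + 1)) S' := hfS i (le_of_lt hi) d
      have hfi1 : f (i + 1) d ∈ insert (0 : Fin (K + 1)) S' := hfS (i + 1) hi d
      by_cases h' : (e : ℕ) < n - t
      · have e0 : glueB (K := K) n t ℓ (f i) e = ℓ := by
          unfold glueB; rw [dif_pos h']
        rw [e0]
        constructor
        · intro hh; exact hℓ (hh ▸ hfi)
        · intro hh; exact hℓ (hh ▸ hfi1)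
      · have e0 : glueB (K := K) n t ℓ (f i) e = f i ⟨(e : ℕ) - (n - t), by omega⟩ := by
          unfold glueB; rw [dif_neg h']
        rw [e0]
        exact hsm ⟨(e : ℕ) - (n - t), by omega⟩ (by simp [Fin.lt_def]; omega)

/-- The single move of the largest disk (index `n - 1`) from `x` to `y`,
while all smaller disks sit at `z`. -/
lemma move_bottom {n j : ℕ} (hj : j + 1 = n) (x y z : Fin (K + 1))
    (hadj : StarAdj K x y) (hzx : z ≠ x) (hzy : z ≠ y) :
    HanoiMove (StarAdj K) (glueT n j (fun _ => z) x) (glueT n j (fun _ => z) y) := by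
  refine ⟨⟨j, by omega⟩, ?_, ?_, ?_⟩
  · have e1 : glueT (K := K) n j (fun _ => z) x ⟨j, by omega⟩ = x := by
      unfold glueT; rw [dif_neg (by simp)]
    have e2 : glueT (K := K) n j (fun _ => z) y ⟨j, by omega⟩ = y := by
      unfold glueT; rw [dif_neg (by simp)]
    rw [e1, e2]
    exact hadj
  · intro e he
    have : (e : ℕ) < j := by
      have := e.isLt
      have : (e : ℕ) ≠ j := fun hh => he (Fin.ext hh)
      omega
    unfold glueT
    rw [dif_pos this, dif_pos this]
  · intro e he
    have h' : (e : ℕ) < j := he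
    have e0 : glueT (K := K) n j (fun _ => z) x e = z := by
      unfold glueT; rw [dif_pos h']
    have e1 : glueT (K := K) n j (fun _ => z) x ⟨j, by omega⟩ = x := by
      unfold glueT; rw [dif_neg (by simp)]
    have e2 : glueT (K := K) n j (fun _ => z) y ⟨j, by omega⟩ = y := by
      unfold glueT; rw [dif_neg (by simp)]
    rw [e0, e1, e2]
    exact ⟨hzx, hzy⟩

lemma glueT_mem {S : Finset (Fin (K + 1))} {n j : ℕ} {z x : Fin (K + 1)}
    (hz : z ∈ insert (0 : Fin (K + 1)) S) (hx : x ∈ insert (0 : Fin (K + 1)) S) :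
    ∀ d, glueT (K := K) n j (fun _ => z) x d ∈ insert (0 : Fin (K + 1)) S := by
  intro d
  unfold glueT
  split
  · exact hz
  · exact hx

/-- Main induction: on any sub-star with leaf set `S`, `n` disks can be moved from
leaf `a` to leaf `b` within `H (S.card + 1) n` moves. -/
lemma main (K : ℕ) (H : ℕ → ℕ → ℕ)
    (hH0 : ∀ k', H k' 0 = 0)
    (hH3 : ∀ n, 1 ≤ n → H 3 n = 3 * H 3 (n - 1) + 2)
    (hHk : ∀ k', 4 ≤ k' → ∀ n, 1 ≤ n →
      H k' n = sInf {v | ∃ t, 1 ≤ t ∧ t ≤ n ∧ v = 2 * H k' (n - t) + H (k' - 1) t}) :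
    ∀ N n (S : Finset (Fin (K + 1))), n + S.card ≤ N → (0 : Fin (K + 1)) ∉ S → 2 ≤ S.card →
      ∀ a ∈ S, ∀ b ∈ S, a ≠ b →
      ∃ m ≤ H (S.card + 1) n, ReachIn K S (fun _ : Fin n => a) (fun _ => b) m := by
  intro N
  induction N with
  | zero =>
    intro n S hN _ h2 _ _ _ _ _
    omega
  | succ N ih =>
    intro n S hN h0S h2S a ha b hb hab
    have haS : a ∈ insert (0 : Fin (K + 1)) S := Finset.mem_insert_of_mem ha
    have hbS : b ∈ insert (0 : Fin (K + 1)) S := Finset.mem_insert_of_mem hb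
    have h0m : (0 : Fin (K + 1)) ∈ insert (0 : Fin (K + 1)) S := Finset.mem_insert_self _ _
    have ha0 : a ≠ 0 := fun hh => h0S (hh ▸ ha)
    have hb0 : b ≠ 0 := fun hh => h0S (hh ▸ hb)
    rcases Nat.eq_zero_or_pos n with hn | hn
    · subst hn
      refine ⟨0, by rw [hH0], ?_⟩
      exact ReachIn.zero (funext fun d => d.elim0) (fun d => d.elim0)
    rcases eq_or_lt_of_le h2S with hcard | hcard
    · -- base case: S.card = 2, the path graph
      obtain ⟨m1, hm1, r1⟩ := ih (n - 1) S (by omega) h0S h2S a ha b hb hab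
      obtain ⟨m2, hm2, r2⟩ := ih (n - 1) S (by omega) h0S h2S b hb a ha hab.symm
      have hjn : n - 1 ≤ n := by omega
      have hj : (n - 1) + 1 = n := by omega
      -- phase 1: top n-1 disks a → b, big disk at a
      have A1 : ReachIn K S (fun _ : Fin n => a) (glueT n (n - 1) (fun _ => b) a) m1 := by
        have := liftTop (n := n) hjn a haS r1
        rwa [glueT_const] at this
      -- phase 2: big disk a → 0
      have A2 : ReachIn K S (glueT n (n - 1) (fun _ => b) a)
          (glueT n (n - 1) (fun _ => b) (0 : Fin (K + 1))) 1 :=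
        ReachIn.single (move_bottom hj a 0 b (Or.inr ⟨rfl, ha0⟩) hab.symm hb0)
          (glueT_mem hbS haS) (glueT_mem hbS h0m)
      -- phase 3: top n-1 disks b → a, big disk at 0
      have A3 : ReachIn K S (glueT n (n - 1) (fun _ => b) (0 : Fin (K + 1)))
          (glueT n (n - 1) (fun _ => a) (0 : Fin (K + 1))) m2 :=
        liftTop (n := n) hjn 0 h0m r2
      -- phase 4: big disk 0 → b
      have A4 : ReachIn K S (glueT n (n - 1) (fun _ => a) (0 : Fin (K + 1)))
          (glueT n (n - 1) (fun _ => a) b) 1 :=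
        ReachIn.single (move_bottom hj 0 b a (Or.inl ⟨rfl, hb0⟩) ha0 hab)
          (glueT_mem haS h0m) (glueT_mem haS hbS)
      -- phase 5: top n-1 disks a → b, big disk at b
      have A5 : ReachIn K S (glueT n (n - 1) (fun _ => a) b) (fun _ : Fin n => b) m1 := by
        have := liftTop (n := n) hjn b hbS r1
        rwa [glueT_const] at this
      refine ⟨m1 + 1 + m2 + 1 + m1, ?_, ((((A1.trans A2).trans A3).trans A4).trans A5)⟩
      have hc3 : S.card + 1 = 3 := by omega
      rw [hc3]
      rw [hc3] at hm1 hm2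
      have := hH3 n hn
      omega
    · -- recursive case: S.card ≥ 3
      have h4 : 4 ≤ S.card + 1 := by omega
      have hset : {v | ∃ t, 1 ≤ t ∧ t ≤ n ∧
          v = 2 * H (S.card + 1) (n - t) + H (S.card + 1 - 1) t}.Nonempty :=
        ⟨2 * H (S.card + 1) (n - n) + H (S.card + 1 - 1) n, n, hn, le_refl n, rfl⟩
      have hmem := Nat.sInf_mem hset
      rw [← hHk (S.card + 1) h4 n hn] at hmem
      obtain ⟨t, ht1, htn, hteq⟩ := hmem
      -- pick a spare leaf ℓ
      have hbe : b ∈ S.erase a := Finset.mem_erase.2 ⟨hab.symm, hb⟩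
      have hcard2 : ((S.erase a).erase b).card = S.card - 2 := by
        rw [Finset.card_erase_of_mem hbe, Finset.card_erase_of_mem ha]
        omega
      have hne2 : ((S.erase a).erase b).Nonempty := by
        rw [← Finset.card_pos, hcard2]; omega
      obtain ⟨ℓ, hℓ⟩ := hne2
      have hℓb : ℓ ≠ b := (Finset.mem_erase.1 hℓ).1
      have hℓa : ℓ ≠ a := (Finset.mem_erase.1 (Finset.mem_erase.1 hℓ).2).1
      have hℓS : ℓ ∈ S := (Finset.mem_erase.1 (Finset.mem_erase.1 hℓ).2).2
      have hℓ0 : ℓ ≠ 0 := fun hh => h0S (hh ▸ hℓS)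
      have hℓmem : ℓ ∈ insert (0 : Fin (K + 1)) S := Finset.mem_insert_of_mem hℓS
      -- recursive calls
      obtain ⟨m1, hm1, r1⟩ := ih (n - t) S (by omega) h0S h2S a ha ℓ hℓS hℓa.symm
      obtain ⟨m3, hm3, r3⟩ := ih (n - t) S (by omega) h0S h2S ℓ hℓS b hb hℓb
      have hcardE : (S.erase ℓ).card = S.card - 1 := Finset.card_erase_of_mem hℓS
      have h0E : (0 : Fin (K + 1)) ∉ S.erase ℓ := fun hh => h0S (Finset.mem_of_mem_erase hh)
      have h2E : 2 ≤ (S.erase ℓ).card := by omega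
      have haE : a ∈ S.erase ℓ := Finset.mem_erase.2 ⟨Ne.symm hℓa, ha⟩
      have hbE : b ∈ S.erase ℓ := Finset.mem_erase.2 ⟨Ne.symm hℓb, hb⟩
      obtain ⟨m2, hm2, r2⟩ := ih t (S.erase ℓ) (by omega) h0E h2E a haE b hbE hab
      -- assemble
      have hjn : n - t ≤ n := by omega
      have A1 : ReachIn K S (fun _ : Fin n => a) (glueT n (n - t) (fun _ => ℓ) a) m1 := by
        have := liftTop (n := n) hjn a haS r1
        rwa [glueT_const] at this
      have hℓnot : ℓ ∉ insert (0 : Fin (K + 1)) (S.erase ℓ) := by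
        simp [Finset.mem_insert, hℓ0]
      have A2 : ReachIn K S (glueB n t ℓ (fun _ : Fin t => a))
          (glueB n t ℓ (fun _ : Fin t => b)) m2 :=
        liftBot htn ℓ hℓmem (Finset.erase_subset _ _) hℓnot r2
      have A3 : ReachIn K S (glueT n (n - t) (fun _ => ℓ) b) (fun _ : Fin n => b) m3 := by
        have := liftTop (n := n) hjn b hbS r3
        rwa [glueT_const] at this
      rw [← glueT_eq_glueB] at A2
      refine ⟨m1 + m2 + m3, ?_, (A1.trans A2).trans A3⟩
      have hcardE1 : (S.erase ℓ).card + 1 = S.card + 1 - 1 := by omega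
      rw [hcardE1] at hm2
      omega

end StarHanoi

/-- Tower of Hanoi on the star graph S_k, leaf to leaf: the generalized Frame–Stewart
number H_{k+1}(n) with (p₃,q₃) = (3,2) and (p_i,q_i) = (2,1) for i ≥ 4 is an
upper bound on the minimum number of moves. -/
theorem hanoi_star_upper_bound
    (k : ℕ) (hk : 2 ≤ k)
    (H : ℕ → ℕ → ℕ)
    (hH0 : ∀ k', H k' 0 = 0)
    (hH3 : ∀ n, 1 ≤ n → H 3 n = 3 * H 3 (n - 1) + 2)
    (hHk : ∀ k', 4 ≤ k' → ∀ n, 1 ≤ n →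
      H k' n = sInf {v | ∃ t, 1 ≤ t ∧ t ≤ n ∧ v = 2 * H k' (n - t) + H (k' - 1) t})
    (n : ℕ) :
    ∃ m, m ≤ H (k + 1) n ∧
      HanoiReach (StarAdj k) (fun _ : Fin n => (1 : Fin (k + 1))) (fun _ => 2) m := by
  classical
  set S : Finset (Fin (k + 1)) := Finset.univ.erase 0 with hS
  have hScard : S.card = k := by
    rw [hS, Finset.card_erase_of_mem (Finset.mem_univ _), Finset.card_univ, Fintype.card_fin]
    omega
  have hv1 : ((1 : Fin (k + 1)) : ℕ) = 1 := by
    have : ((1 : Fin (k + 1)) : ℕ) = 1 % (k + 1) := rfl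
    rw [this, Nat.mod_eq_of_lt (by omega)]
  have hv2 : ((2 : Fin (k + 1)) : ℕ) = 2 := by
    have : ((2 : Fin (k + 1)) : ℕ) = 2 % (k + 1) := rfl
    rw [this, Nat.mod_eq_of_lt (by omega)]
  have h10 : (1 : Fin (k + 1)) ≠ 0 := by
    intro h
    have h' := congrArg Fin.val h
    rw [hv1, Fin.val_zero] at h'
    omega
  have h20 : (2 : Fin (k + 1)) ≠ 0 := by
    intro h
    have h' := congrArg Fin.val h
    rw [hv2, Fin.val_zero] at h'
    omega
  have h12 : (1 : Fin (k + 1)) ≠ 2 := by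
    intro h
    have h' := congrArg Fin.val h
    rw [hv1, hv2] at h'
    omega
  have h1S : (1 : Fin (k + 1)) ∈ S := Finset.mem_erase.2 ⟨h10, Finset.mem_univ _⟩
  have h2S : (2 : Fin (k + 1)) ∈ S := Finset.mem_erase.2 ⟨h20, Finset.mem_univ _⟩
  have h0S : (0 : Fin (k + 1)) ∉ S := by simp [hS]
  obtain ⟨m, hm, hr⟩ := StarHanoi.main k H hH0 hH3 hHk (n + S.card) n S le_rfl h0S
    (by omega) 1 h1S 2 h2S h12
  rw [hScard] at hm
  exact ⟨m, hm, hr.hanoiReach⟩
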